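/- Let r > 0 and let X, Y be real random variables whose moments of order k agree for all integers 0 ≤ k ≤ ⌈r⌉ - 1, and which have finite absolute moments of order r. Then d_r(X,Y) = sup_{ξ ≠ 0} |f̂_X(ξ) - f̂_Y(ξ)|/|ξ|^r is finite. -/

import Mathlib

open MeasureTheory
open scoped ENNReal

variable {Ω : Type*} [MeasureSpace Ω]

/-- Characteristic function of a real random variable. -/
noncomputable def charFn (X : Ω → ℝ) (ξ : ℝ) : ℂ :=
  ∫ ω, Complex.exp (-Complex.I * ξ * X ω)

/-- The Fourier-based metric d_r, with values in the extended nonnegative reals. -/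
noncomputable def fourierDist (r : ℝ) (X Y : Ω → ℝ) : ℝ≥0∞ :=
  ⨆ ξ : {ξ : ℝ // ξ ≠ 0},
    ENNReal.ofReal (‖charFn X ξ.1 - charFn Y ξ.1‖ / |ξ.1| ^ r)

set_option linter.unusedSectionVars false

/-- Taylor remainder of `exp (I x)`. -/
noncomputable def expRem (n : ℕ) (x : ℝ) : ℂ :=
  Complex.exp (Complex.I * x) - ∑ k ∈ Finset.range n, (Complex.I * x) ^ k / k.factorial

lemma expRem_hasDerivAt (n : ℕ) (x : ℝ) :
    HasDerivAt (fun t : ℝ => expRem (n + 1) t) (Complex.I * expRem n x) x := by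
  have h1 : HasDerivAt (fun z : ℂ => Complex.exp (Complex.I * z))
      (Complex.I * Complex.exp (Complex.I * (x : ℂ))) (x : ℂ) := by
    have := (Complex.hasDerivAt_exp (Complex.I * x)).comp (x : ℂ)
        ((hasDerivAt_id (x : ℂ)).const_mul Complex.I)
    rw [mul_comm]
    simpa only [mul_one, Function.comp_def] using this
  have h2 : ∀ k : ℕ, HasDerivAt (fun z : ℂ => (Complex.I * z) ^ k / k.factorial)
      ((k : ℂ) * (Complex.I * (x : ℂ)) ^ (k - 1) * Complex.I / k.factorial) (x : ℂ) := by
    intro k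
    have := (((hasDerivAt_id (x : ℂ)).const_mul Complex.I).pow k).div_const (k.factorial : ℂ)
    simpa [mul_comm, mul_assoc, mul_left_comm] using this
  have h3 : HasDerivAt (fun z : ℂ => Complex.exp (Complex.I * z)
        - ∑ k ∈ Finset.range (n + 1), (Complex.I * z) ^ k / k.factorial)
      (Complex.I * expRem n x) (x : ℂ) := by
    have hsum := HasDerivAt.sum (fun k _ => h2 k) (u := Finset.range (n + 1))
    have hkey : ∑ k ∈ Finset.range (n + 1),
        ((k : ℂ) * (Complex.I * (x : ℂ)) ^ (k - 1) * Complex.I / k.factorial)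
        = Complex.I * ∑ k ∈ Finset.range n, (Complex.I * (x : ℂ)) ^ k / k.factorial := by
      rw [Finset.sum_range_succ']
      simp only [Nat.cast_zero, zero_mul, zero_div, add_zero, Nat.add_sub_cancel]
      rw [Finset.mul_sum]
      refine Finset.sum_congr rfl fun k _ => ?_
      have hk : ((k : ℂ) + 1) ≠ 0 := by exact Nat.cast_add_one_ne_zero k
      have hf : ((k.factorial : ℂ)) ≠ 0 := by exact_mod_cast k.factorial_ne_zero
      rw [Nat.factorial_succ]
      push_cast
      field_simp
    have := h1.sub hsum
    rw [hkey, ← mul_sub] at this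
    exact this.congr_of_eventuallyEq (Filter.Eventually.of_forall fun z => by simp)
  simpa [expRem] using h3.comp_ofReal

lemma expRem_continuous (n : ℕ) : Continuous (fun t : ℝ => expRem n t) := by
  unfold expRem
  fun_prop

lemma expRem_norm_le (n : ℕ) : ∀ x : ℝ, 0 ≤ x → ‖expRem n x‖ ≤ x ^ n / n.factorial := by
  induction n with
  | zero =>
    intro x hx
    simp [expRem, Complex.norm_exp]
  | succ n ih =>
    intro x hx
    have hderiv : ∀ t ∈ Set.uIcc 0 x, HasDerivAt (fun t : ℝ => expRem (n + 1) t)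
        (Complex.I * expRem n t) t := fun t _ => expRem_hasDerivAt n t
    have hint : IntervalIntegrable (fun t : ℝ => Complex.I * expRem n t) volume 0 x :=
      (continuous_const.mul (expRem_continuous n)).intervalIntegrable 0 x
    have hftc := intervalIntegral.integral_eq_sub_of_hasDerivAt hderiv hint
    have h0 : expRem (n + 1) 0 = 0 := by
      simp [expRem, Finset.sum_range_succ']
    rw [h0, sub_zero] at hftc
    have hf : ((n.factorial : ℝ)) ≠ 0 := by exact_mod_cast n.factorial_ne_zero
    calc ‖expRem (n + 1) x‖ = ‖∫ t in (0:ℝ)..x, Complex.I * expRem n t‖ := by rw [hftc]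
      _ ≤ ∫ t in (0:ℝ)..x, ‖Complex.I * expRem n t‖ :=
          intervalIntegral.norm_integral_le_integral_norm hx
      _ ≤ ∫ t in (0:ℝ)..x, t ^ n / n.factorial := by
          apply intervalIntegral.integral_mono_on hx (hint.norm)
            (((continuous_pow n).div_const ((n.factorial : ℝ))).intervalIntegrable 0 x)
          intro t ht
          rw [Set.mem_Icc] at ht
          simpa [norm_mul, Complex.norm_I] using ih t ht.1
      _ = x ^ (n + 1) / (n + 1).factorial := by
          rw [intervalIntegral.integral_div, integral_pow, Nat.factorial_succ]
          push_cast
          field_simp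
          simp


lemma expRem_norm_le' (n : ℕ) :
    ∀ x : ℝ, 0 ≤ x → ‖expRem (n + 1) x‖ ≤ 2 * x ^ n / n.factorial := by
  induction n with
  | zero =>
    intro x hx
    have h1 : expRem 1 x = Complex.exp (Complex.I * x) - 1 := by simp [expRem]
    rw [h1]
    calc ‖Complex.exp (Complex.I * (x:ℂ)) - 1‖
        ≤ ‖Complex.exp (Complex.I * (x:ℂ))‖ + ‖(1:ℂ)‖ := norm_sub_le _ _
      _ ≤ 2 := by simp [Complex.norm_exp]; norm_num
      _ = 2 * x ^ 0 / Nat.factorial 0 := by simp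
  | succ n ih =>
    intro x hx
    have hderiv : ∀ t ∈ Set.uIcc 0 x, HasDerivAt (fun t : ℝ => expRem (n + 2) t)
        (Complex.I * expRem (n + 1) t) t := fun t _ => expRem_hasDerivAt (n + 1) t
    have hint : IntervalIntegrable (fun t : ℝ => Complex.I * expRem (n + 1) t) volume 0 x :=
      (continuous_const.mul (expRem_continuous (n + 1))).intervalIntegrable 0 x
    have hftc := intervalIntegral.integral_eq_sub_of_hasDerivAt hderiv hint
    have h0 : expRem (n + 2) 0 = 0 := by simp [expRem, Finset.sum_range_succ']
    rw [h0, sub_zero] at hftc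
    calc ‖expRem (n + 2) x‖ = ‖∫ t in (0:ℝ)..x, Complex.I * expRem (n + 1) t‖ := by rw [hftc]
      _ ≤ ∫ t in (0:ℝ)..x, ‖Complex.I * expRem (n + 1) t‖ :=
          intervalIntegral.norm_integral_le_integral_norm hx
      _ ≤ ∫ t in (0:ℝ)..x, 2 * t ^ n / n.factorial := by
          apply intervalIntegral.integral_mono_on hx (hint.norm)
            (((continuous_const.mul (continuous_pow n)).div_const ((n.factorial : ℝ))).intervalIntegrable 0 x)
          intro t ht
          rw [Set.mem_Icc] at ht
          simpa [norm_mul, Complex.norm_I] using ih t ht.1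
      _ = 2 * x ^ (n + 1) / (n + 1).factorial := by
          simp only [mul_div_assoc]
          rw [intervalIntegral.integral_const_mul, intervalIntegral.integral_div, integral_pow,
            Nat.factorial_succ]
          push_cast
          field_simp
          simp

lemma expRem_neg (n : ℕ) (x : ℝ) : expRem n (-x) = starRingEnd ℂ (expRem n x) := by
  unfold expRem
  rw [map_sub, map_sum, ← Complex.exp_conj]
  push_cast
  congr 1
  · congr 1
    simp [Complex.conj_ofReal]
  · refine Finset.sum_congr rfl fun k _ => ?_
    rw [map_div₀, map_pow, map_mul]
    simp [Complex.conj_ofReal]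

lemma expRem_norm_abs (n : ℕ) (x : ℝ) : ‖expRem n x‖ = ‖expRem n |x|‖ := by
  rcases abs_choice x with h | h
  · rw [h]
  · rw [h, expRem_neg]
    simp

/-- The key pointwise bound: if `N - 1 ≤ r ≤ N`, `N ≥ 1`, then `‖expRem N x‖ ≤ 2 |x|^r`. -/
lemma expRem_norm_le_rpow {r : ℝ} (hr : 0 < r) (x : ℝ) :
    ‖expRem ⌈r⌉₊ x‖ ≤ 2 * |x| ^ r := by
  obtain ⟨n, hn⟩ : ∃ n : ℕ, ⌈r⌉₊ = n + 1 :=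
    ⟨⌈r⌉₊ - 1, (Nat.succ_pred_eq_of_pos (Nat.ceil_pos.mpr hr)).symm⟩
  have hrn : r ≤ (n : ℝ) + 1 := by
    have := Nat.le_ceil r; rw [hn] at this; exact_mod_cast this
  have hnr : (n : ℝ) ≤ r := by
    by_contra h
    push_neg at h
    have : ⌈r⌉₊ ≤ n := Nat.ceil_le.mpr h.le
    omega
  rw [hn, expRem_norm_abs]
  set y := |x| with hy
  have hy0 : 0 ≤ y := abs_nonneg x
  rcases eq_or_lt_of_le hy0 with h0 | h0
  · have : expRem (n + 1) y = 0 := by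
      rw [← h0]
      simp [expRem, Finset.sum_range_succ']
    rw [this]
    simp [Real.rpow_nonneg]
    positivity
  rcases le_total y 1 with h1 | h1
  · calc ‖expRem (n + 1) y‖ ≤ y ^ (n + 1) / (n + 1).factorial := expRem_norm_le _ y hy0
      _ ≤ y ^ (n + 1) := by
          apply div_le_self (by positivity)
          exact_mod_cast Nat.one_le_iff_ne_zero.mpr (n + 1).factorial_ne_zero
      _ = y ^ ((n + 1 : ℕ) : ℝ) := (Real.rpow_natCast y (n + 1)).symm
      _ ≤ y ^ r := by
          apply Real.rpow_le_rpow_of_exponent_ge h0 h1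
          push_cast
          exact hrn
      _ ≤ 2 * y ^ r := by nlinarith [Real.rpow_nonneg hy0 r]
  · calc ‖expRem (n + 1) y‖ ≤ 2 * y ^ n / n.factorial := expRem_norm_le' _ y hy0
      _ ≤ 2 * y ^ n := by
          apply div_le_self (by positivity)
          exact_mod_cast Nat.one_le_iff_ne_zero.mpr n.factorial_ne_zero
      _ = 2 * y ^ ((n : ℕ) : ℝ) := by rw [Real.rpow_natCast]
      _ ≤ 2 * y ^ r := by
          have := Real.rpow_le_rpow_of_exponent_le h1 hnr
          linarith


section aux
variable [IsProbabilityMeasure (volume : Measure Ω)]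

lemma expRem_comp_eq (N : ℕ) (ξ : ℝ) (X : Ω → ℝ) (ω : Ω) :
    expRem N (-(ξ * X ω)) = Complex.exp (-Complex.I * ξ * X ω)
      - ∑ k ∈ Finset.range N, ((-Complex.I * ξ) ^ k / k.factorial) * (((X ω) ^ k : ℝ) : ℂ) := by
  unfold expRem
  congr 1
  · congr 1
    push_cast
    ring
  · refine Finset.sum_congr rfl fun k _ => ?_
    push_cast
    ring

lemma integrable_cexp (ξ : ℝ) (X : Ω → ℝ) (hXm : Measurable X) :
    Integrable (fun ω => Complex.exp (-Complex.I * ξ * X ω)) := by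
  have hm : Measurable (fun ω => Complex.exp (-Complex.I * ξ * X ω)) :=
    Complex.measurable_exp.comp (((Complex.measurable_ofReal.comp hXm).const_mul _))
  refine (integrable_const (1 : ℝ)).mono' hm.aestronglyMeasurable ?_
  filter_upwards with ω
  rw [Complex.norm_exp]
  simp

lemma integrable_polypart (N : ℕ) (ξ : ℝ) (X : Ω → ℝ)
    (hint : ∀ k ∈ Finset.range N, Integrable (fun ω => (X ω) ^ k)) :
    Integrable (fun ω =>
      ∑ k ∈ Finset.range N, ((-Complex.I * ξ) ^ k / k.factorial) * (((X ω) ^ k : ℝ) : ℂ)) := by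
  apply integrable_finset_sum
  intro k hk
  exact ((hint k hk).ofReal).const_mul _

lemma integrable_expRem_comp (N : ℕ) (ξ : ℝ) (X : Ω → ℝ) (hXm : Measurable X)
    (hint : ∀ k ∈ Finset.range N, Integrable (fun ω => (X ω) ^ k)) :
    Integrable (fun ω => expRem N (-(ξ * X ω))) := by
  have : (fun ω => expRem N (-(ξ * X ω))) = fun ω => Complex.exp (-Complex.I * ξ * X ω)
      - ∑ k ∈ Finset.range N, ((-Complex.I * ξ) ^ k / k.factorial) * (((X ω) ^ k : ℝ) : ℂ) :=
    funext (expRem_comp_eq N ξ X)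
  rw [this]
  exact (integrable_cexp ξ X hXm).sub (integrable_polypart N ξ X hint)

lemma integral_expRem_comp (N : ℕ) (ξ : ℝ) (X : Ω → ℝ) (hXm : Measurable X)
    (hint : ∀ k ∈ Finset.range N, Integrable (fun ω => (X ω) ^ k)) :
    ∫ ω, expRem N (-(ξ * X ω)) = charFn X ξ
      - ∑ k ∈ Finset.range N, ((-Complex.I * ξ) ^ k / k.factorial) * ((∫ ω, (X ω) ^ k : ℝ) : ℂ) := by
  rw [funext (expRem_comp_eq N ξ X),
    integral_sub (integrable_cexp ξ X hXm) (integrable_polypart N ξ X hint)]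
  unfold charFn
  congr 1
  rw [integral_finset_sum (Finset.range N)
    (f := fun k ω => ((-Complex.I * (ξ:ℂ)) ^ k / (k.factorial : ℂ)) * (((X ω) ^ k : ℝ) : ℂ))
    (fun k hk => ((hint k hk).ofReal).const_mul _)]
  refine Finset.sum_congr rfl fun k hk => ?_
  rw [MeasureTheory.integral_const_mul]
  congr 1
  exact integral_ofReal (𝕜 := ℂ) (f := fun ω => (X ω) ^ k)

lemma norm_integral_expRem_le {r : ℝ} (hr : 0 < r) (ξ : ℝ) (X : Ω → ℝ) (hXm : Measurable X)
    (hint : ∀ k ∈ Finset.range ⌈r⌉₊, Integrable (fun ω => (X ω) ^ k))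
    (hXr : Integrable (fun ω => |X ω| ^ r)) :
    ‖∫ ω, expRem ⌈r⌉₊ (-(ξ * X ω))‖ ≤ 2 * |ξ| ^ r * ∫ ω, |X ω| ^ r := by
  calc ‖∫ ω, expRem ⌈r⌉₊ (-(ξ * X ω))‖ ≤ ∫ ω, ‖expRem ⌈r⌉₊ (-(ξ * X ω))‖ :=
        norm_integral_le_integral_norm _
    _ ≤ ∫ ω, 2 * |ξ| ^ r * |X ω| ^ r := by
        apply integral_mono (integrable_expRem_comp _ ξ X hXm hint).norm (hXr.const_mul _)
        intro ω
        calc ‖expRem ⌈r⌉₊ (-(ξ * X ω))‖ ≤ 2 * |(-(ξ * X ω))| ^ r := expRem_norm_le_rpow hr _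
          _ = 2 * |ξ| ^ r * |X ω| ^ r := by
              rw [abs_neg, abs_mul, Real.mul_rpow (abs_nonneg _) (abs_nonneg _)]
              ring
    _ = 2 * |ξ| ^ r * ∫ ω, |X ω| ^ r := integral_const_mul _ _

end aux



/-- If X and Y have equal moments up to order ⌈r⌉ - 1 and finite absolute
moments of order r, then the Fourier metric d_r(X,Y) is finite. -/
theorem fourierDist_lt_top [IsProbabilityMeasure (volume : Measure Ω)]
    (r : ℝ) (hr : 0 < r) (X Y : Ω → ℝ)
    (hXm : Measurable X) (hYm : Measurable Y)
    (hmom : ∀ k : ℕ, (k : ℤ) ≤ ⌈r⌉ - 1 → ∫ ω, (X ω) ^ k = ∫ ω, (Y ω) ^ k)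
    (hmomint : ∀ k : ℕ, (k : ℤ) ≤ ⌈r⌉ - 1 →
      Integrable (fun ω => (X ω) ^ k) ∧ Integrable (fun ω => (Y ω) ^ k))
    (hXr : Integrable (fun ω => |X ω| ^ r))
    (hYr : Integrable (fun ω => |Y ω| ^ r)) :
    fourierDist r X Y < ⊤ := by
  have hNk : ∀ k ∈ Finset.range ⌈r⌉₊, (k : ℤ) ≤ ⌈r⌉ - 1 := by
    intro k hk
    rw [Finset.mem_range] at hk
    have h1 : ((⌈r⌉₊ : ℕ) : ℤ) = ⌈r⌉ := Int.natCast_ceil_eq_ceil hr.le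
    omega
  have hintX : ∀ k ∈ Finset.range ⌈r⌉₊, Integrable (fun ω => (X ω) ^ k) :=
    fun k hk => (hmomint k (hNk k hk)).1
  have hintY : ∀ k ∈ Finset.range ⌈r⌉₊, Integrable (fun ω => (Y ω) ^ k) :=
    fun k hk => (hmomint k (hNk k hk)).2
  set A := ∫ ω, |X ω| ^ r with hA
  set B := ∫ ω, |Y ω| ^ r with hB
  have key : ∀ ξ : ℝ, ξ ≠ 0 →
      ‖charFn X ξ - charFn Y ξ‖ ≤ 2 * |ξ| ^ r * (A + B) := by
    intro ξ _
    have hX := integral_expRem_comp ⌈r⌉₊ ξ X hXm hintX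
    have hY := integral_expRem_comp ⌈r⌉₊ ξ Y hYm hintY
    have hsum_eq : (∑ k ∈ Finset.range ⌈r⌉₊,
          ((-Complex.I * ξ) ^ k / k.factorial) * ((∫ ω, (X ω) ^ k : ℝ) : ℂ))
        = ∑ k ∈ Finset.range ⌈r⌉₊,
          ((-Complex.I * ξ) ^ k / k.factorial) * ((∫ ω, (Y ω) ^ k : ℝ) : ℂ) := by
      refine Finset.sum_congr rfl fun k hk => ?_
      rw [hmom k (hNk k hk)]
    have hdiff : charFn X ξ - charFn Y ξ
        = (∫ ω, expRem ⌈r⌉₊ (-(ξ * X ω))) - ∫ ω, expRem ⌈r⌉₊ (-(ξ * Y ω)) := by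
      rw [hX, hY, hsum_eq]
      ring
    rw [hdiff]
    calc ‖(∫ ω, expRem ⌈r⌉₊ (-(ξ * X ω))) - ∫ ω, expRem ⌈r⌉₊ (-(ξ * Y ω))‖
        ≤ ‖∫ ω, expRem ⌈r⌉₊ (-(ξ * X ω))‖ + ‖∫ ω, expRem ⌈r⌉₊ (-(ξ * Y ω))‖ := norm_sub_le _ _
      _ ≤ 2 * |ξ| ^ r * A + 2 * |ξ| ^ r * B :=
          add_le_add (norm_integral_expRem_le hr ξ X hXm hintX hXr)
            (norm_integral_expRem_le hr ξ Y hYm hintY hYr)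
      _ = 2 * |ξ| ^ r * (A + B) := by ring
  rw [fourierDist]
  refine lt_of_le_of_lt (iSup_le fun ξ => ?_)
    (ENNReal.ofReal_lt_top (r := 2 * (A + B)))
  apply ENNReal.ofReal_le_ofReal
  rw [div_le_iff₀ (Real.rpow_pos_of_pos (abs_pos.mpr ξ.2) r)]
  calc ‖charFn X ξ.1 - charFn Y ξ.1‖ ≤ 2 * |ξ.1| ^ r * (A + B) := key ξ.1 ξ.2
    _ = 2 * (A + B) * |ξ.1| ^ r := by ring
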